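/- The matrix T = M^{-1} U (U^H M^{-1} U)^{-1} U^H M^{-1} + σ^{-2}(I_K − U U^H) − M^{-1}, where M = R + σ² I_K with R positive semi-definite and σ > 0, and U semi-unitary, is Hermitian positive semi-definite. -/

import Mathlib

open Matrix ComplexOrder

/-- The GLRT matrix `T = M⁻¹U(UᴴM⁻¹U)⁻¹UᴴM⁻¹ + σ⁻²(I - UUᴴ) - M⁻¹`, with
`M = R + σ²I`, `R` PSD, `σ > 0`, `U` semi-unitary, is positive semi-definite. -/
theorem stmt3 {K r : ℕ} (R : Matrix (Fin K) (Fin K) ℂ) (hR : R.PosSemidef)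
    (σ : ℝ) (hσ : 0 < σ)
    (U : Matrix (Fin K) (Fin r) ℂ) (hU : Uᴴ * U = 1)
    (M : Matrix (Fin K) (Fin K) ℂ) (hM : M = R + ((σ ^ 2 : ℂ) • (1 : Matrix (Fin K) (Fin K) ℂ))) :
    (M⁻¹ * U * (Uᴴ * M⁻¹ * U)⁻¹ * Uᴴ * M⁻¹
      + ((σ : ℂ) ^ 2)⁻¹ • ((1 : Matrix (Fin K) (Fin K) ℂ) - U * Uᴴ)
      - M⁻¹).PosSemidef := by
  have hσ0 : (σ:ℂ) ≠ 0 := by exact_mod_cast hσ.ne'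
  have hσ2pos : (0:ℂ) < (σ:ℂ)^2 := by
    rw [← Complex.ofReal_pow]
    exact_mod_cast pow_pos hσ 2
  have hMpd : M.PosDef := by
    rw [hM, Matrix.smul_one_eq_diagonal]
    exact Matrix.PosDef.posSemidef_add hR (Matrix.PosDef.diagonal fun _ => hσ2pos)
  have hMdet : IsUnit M.det := (Matrix.isUnit_iff_isUnit_det M).mp hMpd.isUnit
  have hMN : M * M⁻¹ = 1 := Matrix.mul_nonsing_inv M hMdet
  have hNM : M⁻¹ * M = 1 := Matrix.nonsing_inv_mul M hMdet
  have hN : (M⁻¹).PosDef := hMpd.inv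
  have hNh : (M⁻¹)ᴴ = M⁻¹ := hN.isHermitian
  -- W = Uᴴ M⁻¹ U is positive definite
  have hWpd : (Uᴴ * M⁻¹ * U).PosDef := by
    refine Matrix.PosDef.of_dotProduct_mulVec_pos (Matrix.isHermitian_conjTranspose_mul_mul U hN.isHermitian) fun x hx => ?_
    have hUx : U *ᵥ x ≠ 0 := by
      intro h
      apply hx
      have : Uᴴ *ᵥ (U *ᵥ x) = Uᴴ *ᵥ 0 := by rw [h]
      simpa [Matrix.mulVec_mulVec, hU] using this
    simpa only [star_mulVec, dotProduct_mulVec, vecMul_vecMul] using hN.dotProduct_mulVec_pos hUx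
  have hWdet : IsUnit (Uᴴ * M⁻¹ * U).det := (Matrix.isUnit_iff_isUnit_det _).mp hWpd.isUnit
  have hWW : (Uᴴ * M⁻¹ * U) * (Uᴴ * M⁻¹ * U)⁻¹ = 1 := Matrix.mul_nonsing_inv _ hWdet
  have hWW' : (Uᴴ * M⁻¹ * U)⁻¹ * (Uᴴ * M⁻¹ * U) = 1 := Matrix.nonsing_inv_mul _ hWdet
  have hWinv : ((Uᴴ * M⁻¹ * U)⁻¹).PosSemidef := hWpd.inv.posSemidef
  have hcs : ((σ:ℂ)^2)⁻¹ * (σ:ℂ)^2 = 1 := inv_mul_cancel₀ (pow_ne_zero 2 hσ0)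
  have e1 : ((σ:ℂ)^2)⁻¹ • (M*M) - M = ((σ:ℂ)^2)⁻¹ • (R*R) + R := by
    rw [hM]
    simp only [Matrix.mul_add, Matrix.add_mul, Matrix.smul_mul, Matrix.mul_smul,
      Matrix.mul_one, Matrix.one_mul, smul_add, smul_smul, ← mul_assoc, hcs, one_smul, one_mul]
    abel
  have hA1 : ((σ:ℂ)^2)⁻¹ • (1 : Matrix (Fin K) (Fin K) ℂ) - M⁻¹
      = (M⁻¹)ᴴ * (((σ:ℂ)^2)⁻¹ • (R*R) + R) * M⁻¹ := by
    rw [hNh, ← e1]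
    simp only [Matrix.mul_sub, Matrix.sub_mul, Matrix.mul_smul, Matrix.smul_mul,
      ← Matrix.mul_assoc, hNM, Matrix.one_mul, hMN]
  have hRR : (((σ:ℂ)^2)⁻¹ • (R*R)).PosSemidef := by
    have h2 : ((σ:ℂ)^2)⁻¹ • (R*R) = ((σ:ℂ)⁻¹ • R)ᴴ * ((σ:ℂ)⁻¹ • R) := by
      rw [Matrix.conjTranspose_smul, hR.isHermitian]
      rw [Matrix.smul_mul, Matrix.mul_smul, smul_smul]
      congr 1
      rw [show (star ((σ:ℂ)⁻¹)) = (σ:ℂ)⁻¹ by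
        simp [Complex.star_def, Complex.conj_ofReal]]
      rw [← mul_inv, ← sq]
    rw [h2]; exact Matrix.posSemidef_conjTranspose_mul_self _
  have hApsd : (((σ:ℂ)^2)⁻¹ • (1 : Matrix (Fin K) (Fin K) ℂ) - M⁻¹).PosSemidef := by
    rw [hA1]; exact (hRR.add hR).conjTranspose_mul_mul_same _
  set V := (Uᴴ * M⁻¹ * U)⁻¹ with hV
  have ru : ∀ {m : Type} (X : Matrix (Fin r) m ℂ), Uᴴ * (U * X) = X := by
    intro m X; rw [← Matrix.mul_assoc, hU, Matrix.one_mul]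
  have hgrp : ∀ {m : Type} (X : Matrix (Fin r) m ℂ),
      Uᴴ * (M⁻¹ * (U * X)) = (Uᴴ * M⁻¹ * U) * X := by
    intro m X; simp only [Matrix.mul_assoc]
  have rw1 : ∀ {m : Type} (X : Matrix (Fin r) m ℂ),
      Uᴴ * (M⁻¹ * (U * (V * X))) = X := by
    intro m X; rw [hgrp, ← Matrix.mul_assoc, hWW, Matrix.one_mul]
  have rw1' : Uᴴ * (M⁻¹ * (U * V)) = 1 := by
    rw [hgrp, hWW]
  have rv : ∀ {m : Type} (X : Matrix (Fin r) m ℂ),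
      V * (Uᴴ * (M⁻¹ * (U * X))) = X := by
    intro m X; rw [hgrp, ← Matrix.mul_assoc, hWW', Matrix.one_mul]
  have rv' : V * (Uᴴ * (M⁻¹ * U)) = 1 := by
    rw [show Uᴴ * (M⁻¹ * U) = Uᴴ * M⁻¹ * U from (Matrix.mul_assoc _ _ _).symm, hWW']
  have key : M⁻¹ * U * V * Uᴴ * M⁻¹
      + ((σ : ℂ) ^ 2)⁻¹ • ((1 : Matrix (Fin K) (Fin K) ℂ) - U * Uᴴ) - M⁻¹
      = ((1 - U * Uᴴ) * (((σ:ℂ)^2)⁻¹ • (1 : Matrix (Fin K) (Fin K) ℂ) - M⁻¹) * (1 - U * Uᴴ)ᴴ)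
        + ((1 - U * Uᴴ) * (M⁻¹ * U)) * V * ((1 - U * Uᴴ) * (M⁻¹ * U))ᴴ := by
    simp only [Matrix.conjTranspose_sub, Matrix.conjTranspose_mul, Matrix.conjTranspose_one,
      Matrix.conjTranspose_conjTranspose, hNh]
    simp only [Matrix.sub_mul, Matrix.mul_sub, Matrix.one_mul, Matrix.mul_one,
      Matrix.smul_mul, Matrix.mul_smul, smul_sub, Matrix.mul_assoc, ru, rw1, rw1', rv, rv', hU]
    abel
  rw [key]
  exact (hApsd.mul_mul_conjTranspose_same _).add (hWinv.mul_mul_conjTranspose_same _)
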